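/- Let 0 < δ < 1, let P ∈ ℝ^{U×L} have rank L, and let s ∈ ℝ^{U} satisfy 1−δ ≤ s_u ≤ 1+δ for all u. Then Pᵀdiag(s)P is positive definite and L/(1+δ) ≤ tr(P (Pᵀdiag(s)P)⁻¹ Pᵀ) ≤ L/(1−δ). -/

import Mathlib

open Matrix

lemma psd_trace_nonneg {n : Type*} [Fintype n] [DecidableEq n] {A : Matrix n n ℝ} (hA : A.PosSemidef) :
    0 ≤ A.trace := by
  apply Finset.sum_nonneg
  intro i _
  have h := (posSemidef_iff_dotProduct_mulVec.mp hA).2 (Pi.single i 1)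
  simpa [dotProduct, Matrix.mulVec_single, Pi.single_apply, Finset.sum_ite_eq'] using h

open scoped MatrixOrder in
lemma trace_mul_psd_nonneg {n : Type*} [Fintype n] [DecidableEq n]
    {A B : Matrix n n ℝ} (hA : A.PosSemidef) (hB : B.PosSemidef) :
    0 ≤ (A * B).trace := by
  have h2 : A * B = CFC.sqrt A * (CFC.sqrt A * B) := by rw [← mul_assoc, CFC.sqrt_mul_sqrt_self A hA.nonneg]
  rw [h2, Matrix.trace_mul_comm]
  have h3 : CFC.sqrt A * B * CFC.sqrt A = CFC.sqrt A * B * (CFC.sqrt A)ᴴ := by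
    rw [(CFC.sqrt_nonneg A).posSemidef.1.eq]
  rw [h3]
  exact psd_trace_nonneg (hB.mul_mul_conjTranspose_same (CFC.sqrt A))

theorem stmt_9 {U L : ℕ} (δ : ℝ) (hδ0 : 0 < δ) (hδ1 : δ < 1)
    (P : Matrix (Fin U) (Fin L) ℝ) (hP : P.rank = L)
    (s : Fin U → ℝ) (hs : ∀ u, 1 - δ ≤ s u ∧ s u ≤ 1 + δ) :
    (Pᵀ * Matrix.diagonal s * P).PosDef ∧
    (L : ℝ) / (1 + δ) ≤ Matrix.trace (P * (Pᵀ * Matrix.diagonal s * P)⁻¹ * Pᵀ) ∧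
    Matrix.trace (P * (Pᵀ * Matrix.diagonal s * P)⁻¹ * Pᵀ) ≤ (L : ℝ) / (1 - δ) := by
  have h1δ : (0:ℝ) < 1 - δ := by linarith
  have h1δ' : (0:ℝ) < 1 + δ := by linarith
  set M : Matrix (Fin L) (Fin L) ℝ := Pᵀ * Matrix.diagonal s * P with hMdef
  set N : Matrix (Fin L) (Fin L) ℝ := Pᵀ * P with hNdef
  -- injectivity of mulVec
  have hker : LinearMap.ker P.mulVecLin = ⊥ := by
    have h := LinearMap.finrank_range_add_finrank_ker P.mulVecLin
    rw [Module.finrank_pi] at h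
    have hr : Matrix.rank P = Module.finrank ℝ (LinearMap.range P.mulVecLin) := rfl
    have h0 : Module.finrank ℝ (LinearMap.ker P.mulVecLin) = 0 := by
      rw [hr] at hP
      simp only [Fintype.card_fin] at h
      omega
    exact Submodule.finrank_eq_zero.mp h0
  have hPx0 : ∀ x : Fin L → ℝ, P *ᵥ x = 0 → x = 0 := by
    intro x hx
    have : P.mulVecLin x = 0 := by simpa [Matrix.mulVecLin_apply] using hx
    exact (LinearMap.ker_eq_bot.mp hker) (by simpa using this)
  have hsd : (Matrix.diagonal s).PosDef :=
    Matrix.posDef_diagonal_iff.mpr (fun i => by linarith [(hs i).1])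
  have hMpd : M.PosDef := by
    refine Matrix.PosDef.of_dotProduct_mulVec_pos ?_ ?_
    · show Mᴴ = M
      rw [hMdef]
      simp [Matrix.conjTranspose_mul, Matrix.conjTranspose_eq_transpose_of_trivial,
        Matrix.diagonal_transpose, Matrix.mul_assoc]
    · intro x hx
      have hPx : P *ᵥ x ≠ 0 := fun h => hx (hPx0 x h)
      have h := hsd.dotProduct_mulVec_pos hPx
      have he : star x ⬝ᵥ (M *ᵥ x) = star (P *ᵥ x) ⬝ᵥ (Matrix.diagonal s *ᵥ (P *ᵥ x)) := by
        rw [hMdef]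
        simp only [star_trivial, ← Matrix.mulVec_mulVec, dotProduct_mulVec,
          Matrix.vecMul_transpose]
      rw [he]
      exact h
  have hdet : IsUnit M.det := isUnit_iff_ne_zero.mpr hMpd.det_pos.ne'
  have hMM : M⁻¹ * M = 1 := Matrix.nonsing_inv_mul M hdet
  have hMinv : M⁻¹.PosSemidef := hMpd.inv.posSemidef
  -- trace identity
  have htr : Matrix.trace (P * M⁻¹ * Pᵀ) = Matrix.trace (M⁻¹ * N) := by
    rw [Matrix.trace_mul_cycle, hNdef, Matrix.trace_mul_comm]
  -- PSD difference matrices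
  have hconst : ∀ c : ℝ, Pᵀ * Matrix.diagonal (fun _ : Fin U => c) * P = c • N := by
    intro c
    rw [← Matrix.smul_one_eq_diagonal, hNdef]
    rw [Matrix.mul_smul, Matrix.mul_one, Matrix.smul_mul]
  have hdiff : ∀ t : Fin U → ℝ, (∀ u, 0 ≤ t u) →
      (Pᵀ * Matrix.diagonal t * P).PosSemidef := by
    intro t ht
    have := (Matrix.posSemidef_diagonal_iff.mpr fun u => ht u).conjTranspose_mul_mul_same P
    simpa [Matrix.conjTranspose_eq_transpose_of_trivial] using this
  have hsub : ∀ t₁ t₂ : Fin U → ℝ,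
      Pᵀ * Matrix.diagonal (fun u => t₁ u - t₂ u) * P
        = Pᵀ * Matrix.diagonal t₁ * P - Pᵀ * Matrix.diagonal t₂ * P := by
    intro t₁ t₂
    rw [show Matrix.diagonal (fun u => t₁ u - t₂ u) = Matrix.diagonal t₁ - Matrix.diagonal t₂
      from (Matrix.diagonal_sub t₁ t₂).symm]
    rw [Matrix.mul_sub, Matrix.sub_mul]
  have hupperPSD : ((1+δ) • N - M).PosSemidef := by
    have := hdiff (fun u => (1+δ) - s u) (fun u => by linarith [(hs u).2])
    rwa [hsub, hconst] at this
  have hlowerPSD : (M - (1-δ) • N).PosSemidef := by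
    have := hdiff (fun u => s u - (1-δ)) (fun u => by linarith [(hs u).1])
    rwa [hsub, hconst] at this
  -- trace of M⁻¹ * M = L
  have htrMM : Matrix.trace (M⁻¹ * M) = (L : ℝ) := by
    rw [hMM, Matrix.trace_one]
    simp
  have key1 : 0 ≤ (1+δ) * Matrix.trace (M⁻¹ * N) - (L:ℝ) := by
    have h := trace_mul_psd_nonneg hMinv hupperPSD
    rwa [Matrix.mul_sub, Matrix.mul_smul, Matrix.trace_sub, Matrix.trace_smul, htrMM,
      smul_eq_mul] at h
  have key2 : 0 ≤ (L:ℝ) - (1-δ) * Matrix.trace (M⁻¹ * N) := by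
    have h := trace_mul_psd_nonneg hMinv hlowerPSD
    rwa [Matrix.mul_sub, Matrix.mul_smul, Matrix.trace_sub, Matrix.trace_smul, htrMM,
      smul_eq_mul] at h
  refine ⟨hMpd, ?_, ?_⟩
  · rw [htr, div_le_iff₀ h1δ', mul_comm]
    linarith
  · rw [htr, le_div_iff₀ h1δ, mul_comm]
    linarith
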